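/- Let k be a nonnegative integer, let f : ℍ → ℂ be holomorphic, and let p ∈ ℍ with y = Im p. Then the function F : 𝔻 → ℂ defined by F(w) = f(z(p;w))·(1−w)^{−k} is holomorphic on the open unit disc 𝔻, and its n-th Taylor coefficient at 0 equals b_n = ((∂^n f)(p)/n!)·(−4πy)^n, where ∂^n f denotes the n-th iterated Shimura–Maass derivative of f of base weight k. In particular, f admits the expansion f(z) = (1−w)^k · Σ_{n=0}^{∞} b_n · w^n with w = w(p;z), valid for every z ∈ ℍ. -/

import Mathlib

open Complex

/-- The map `w(p; ·) : z ↦ (z − p)/(z − conj p)` from the upper half-plane to the unit disc. -/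
noncomputable def wmap (p z : ℂ) : ℂ := (z - p) / (z - (starRingEnd ℂ) p)

/-- The map `z(p; ·) : w ↦ (conj p · w − p)/(w − 1)` from the unit disc to the upper half-plane. -/
noncomputable def zmap (p w : ℂ) : ℂ := ((starRingEnd ℂ) p * w - p) / (w - 1)

/-- The Wirtinger derivative `∂_z = (1/2)(∂/∂x − i ∂/∂y)` of `f : ℂ → ℂ` at `z`. -/
noncomputable def wirtingerDeriv (f : ℂ → ℂ) (z : ℂ) : ℂ :=
  (1 / 2) * (fderiv ℝ f z 1 - Complex.I * fderiv ℝ f z Complex.I)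

/-- The iterated Shimura–Maass derivative `∂^n f` of base weight `k`. -/
noncomputable def smIter (k : ℤ) (f : ℂ → ℂ) : ℕ → ℂ → ℂ
  | 0 => f
  | n + 1 => fun z => (1 / (2 * (Real.pi : ℂ) * Complex.I)) *
      (wirtingerDeriv (smIter k f n) z +
        ((k : ℂ) + 2 * n) * smIter k f n z / (z - (starRingEnd ℂ) z))

open Topology Filter

lemma isOpenU : IsOpen {z : ℂ | 0 < z.im} := isOpen_lt continuous_const Complex.continuous_im

lemma sub_conj_ne {z : ℂ} (hz : 0 < z.im) : z - (starRingEnd ℂ) z ≠ 0 := by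
  rw [Complex.sub_conj]
  simp only [ne_eq, mul_eq_zero, Complex.I_ne_zero, or_false]
  intro h
  norm_cast at h
  linarith

lemma wd_congr {f g : ℂ → ℂ} {z : ℂ} (h : f =ᶠ[𝓝 z] g) :
    wirtingerDeriv f z = wirtingerDeriv g z := by
  unfold wirtingerDeriv; rw [h.fderiv_eq]

lemma wd_add {f g : ℂ → ℂ} {z : ℂ} (hf : DifferentiableAt ℝ f z)
    (hg : DifferentiableAt ℝ g z) :
    wirtingerDeriv (fun w => f w + g w) z = wirtingerDeriv f z + wirtingerDeriv g z := by
  unfold wirtingerDeriv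
  rw [fderiv_fun_add hf hg]
  simp only [ContinuousLinearMap.add_apply]
  ring

lemma wd_const_mul (c : ℂ) {f : ℂ → ℂ} {z : ℂ} (hf : DifferentiableAt ℝ f z) :
    wirtingerDeriv (fun w => c * f w) z = c * wirtingerDeriv f z := by
  unfold wirtingerDeriv
  rw [fderiv_const_mul hf c]
  simp only [ContinuousLinearMap.smul_apply, smul_eq_mul]
  ring

lemma wd_mul {f g : ℂ → ℂ} {z : ℂ} (hf : DifferentiableAt ℝ f z)
    (hg : DifferentiableAt ℝ g z) :
    wirtingerDeriv (fun w => f w * g w) z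
      = f z * wirtingerDeriv g z + g z * wirtingerDeriv f z := by
  unfold wirtingerDeriv
  rw [fderiv_fun_mul hf hg]
  simp only [ContinuousLinearMap.add_apply, ContinuousLinearMap.smul_apply, smul_eq_mul]
  ring

lemma wd_inv {f : ℂ → ℂ} {z : ℂ} (hf : DifferentiableAt ℝ f z) (h0 : f z ≠ 0) :
    wirtingerDeriv (fun w => (f w)⁻¹) z = -wirtingerDeriv f z / f z ^ 2 := by
  unfold wirtingerDeriv
  have hc : fderiv ℝ (fun w => (f w)⁻¹) z
      = (fderiv ℝ (Inv.inv : ℂ → ℂ) (f z)).comp (fderiv ℝ f z) :=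
    fderiv_comp z (differentiableAt_inv h0) hf
  rw [hc, fderiv_inv' h0]
  simp only [ContinuousLinearMap.comp_apply, ContinuousLinearMap.neg_apply,
    ContinuousLinearMap.mulLeftRight_apply]
  field_simp
  ring

lemma diff_conj (z : ℂ) : DifferentiableAt ℝ (fun w : ℂ => (starRingEnd ℂ) w) z := by
  have : (fun w : ℂ => (starRingEnd ℂ) w) = ⇑Complex.conjCLE := by
    funext w; simp [Complex.conjCLE_apply]
  rw [this]
  exact Complex.conjCLE.differentiableAt

lemma wd_sub_conj (z : ℂ) : wirtingerDeriv (fun w => w - (starRingEnd ℂ) w) z = 1 := by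
  unfold wirtingerDeriv
  have h1 : HasFDerivAt (fun w : ℂ => w - (starRingEnd ℂ) w)
      ((ContinuousLinearMap.id ℝ ℂ) - (Complex.conjCLE : ℂ →L[ℝ] ℂ)) z := by
    have := (hasFDerivAt_id z).fun_sub (Complex.conjCLE.hasFDerivAt (x := z))
    exact this
  rw [h1.fderiv]
  simp [Complex.conjCLE_apply, Complex.conj_I]
  linear_combination (-1 : ℂ) * Complex.I_sq

lemma wd_holo {f : ℂ → ℂ} {z : ℂ} (hf : DifferentiableAt ℂ f z) :
    wirtingerDeriv f z = deriv f z := by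
  unfold wirtingerDeriv
  have h := (hf.hasFDerivAt.restrictScalars ℝ).fderiv
  rw [h]
  simp only [ContinuousLinearMap.coe_restrictScalars']
  have h2 : (fderiv ℂ f z) Complex.I = Complex.I * (fderiv ℂ f z) 1 := by
    have := (fderiv ℂ f z).map_smul Complex.I (1 : ℂ)
    simpa [smul_eq_mul] using this
  rw [h2, ← deriv]  -- deriv f z = fderiv ℂ f z 1
  have : Complex.I * (Complex.I * deriv f z) = -deriv f z := by
    rw [← mul_assoc, Complex.I_mul_I]; ring
  rw [this]; ring

open scoped ContDiff in
lemma smIter_contDiffOn {g : ℂ → ℂ} (hg : DifferentiableOn ℂ g {z : ℂ | 0 < z.im}) (m : ℤ) :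
    ∀ n : ℕ, ContDiffOn ℝ ω (smIter m g n) {z : ℂ | 0 < z.im} := by
  intro n
  induction n with
  | zero =>
    exact (hg.contDiffOn isOpenU).restrict_scalars ℝ
  | succ n ih =>
    show ContDiffOn ℝ ω (fun z => (1 / (2 * (Real.pi : ℂ) * Complex.I)) *
      (wirtingerDeriv (smIter m g n) z +
        ((m : ℂ) + 2 * n) * smIter m g n z / (z - (starRingEnd ℂ) z))) {z : ℂ | 0 < z.im}
    have hfd : ContDiffOn ℝ ω (fun z => fderiv ℝ (smIter m g n) z) {z : ℂ | 0 < z.im} :=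
      ih.fderiv_of_isOpen isOpenU le_rfl
    have h1 : ContDiffOn ℝ ω (fun z => fderiv ℝ (smIter m g n) z 1) {z : ℂ | 0 < z.im} :=
      hfd.clm_apply contDiffOn_const
    have hI : ContDiffOn ℝ ω (fun z => fderiv ℝ (smIter m g n) z Complex.I) {z : ℂ | 0 < z.im} :=
      hfd.clm_apply contDiffOn_const
    have hw : ContDiffOn ℝ ω (fun z => wirtingerDeriv (smIter m g n) z) {z : ℂ | 0 < z.im} := by
      unfold wirtingerDeriv
      exact contDiffOn_const.mul (h1.sub (contDiffOn_const.mul hI))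
    have hconj : ContDiff ℝ ω (fun z : ℂ => z - (starRingEnd ℂ) z) := by
      have : (fun z : ℂ => z - (starRingEnd ℂ) z) = fun z : ℂ => z - Complex.conjCLE z := by
        funext w; simp [Complex.conjCLE_apply]
      rw [this]
      exact contDiff_id.sub (Complex.conjCLE.toContinuousLinearMap.contDiff)
    have hq : ContDiffOn ℝ ω
        (fun z => ((m : ℂ) + 2 * n) * smIter m g n z / (z - (starRingEnd ℂ) z))
        {z : ℂ | 0 < z.im} := by
      simp only [div_eq_mul_inv]
      exact (contDiffOn_const.mul ih).mul
        (hconj.contDiffOn.inv (fun z hz => sub_conj_ne hz))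
    exact contDiffOn_const.mul (hw.add hq)

lemma smIter_diffAt {g : ℂ → ℂ} (hg : DifferentiableOn ℂ g {z : ℂ | 0 < z.im}) (m : ℤ)
    (n : ℕ) {z : ℂ} (hz : 0 < z.im) : DifferentiableAt ℝ (smIter m g n) z := by
  have h := (smIter_contDiffOn hg m n).differentiableOn (by simp)
  exact h.differentiableAt (isOpenU.mem_nhds hz)

lemma deriv_diffOn {g : ℂ → ℂ} (hg : DifferentiableOn ℂ g {z : ℂ | 0 < z.im}) :
    DifferentiableOn ℂ (deriv g) {z : ℂ | 0 < z.im} :=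
  ((hg.analyticOnNhd isOpenU).deriv).differentiableOn

lemma smIter_succ (k : ℤ) (f : ℂ → ℂ) (n : ℕ) (z : ℂ) :
    smIter k f (n+1) z = (1 / (2 * (Real.pi : ℂ) * Complex.I)) *
      (wirtingerDeriv (smIter k f n) z +
        ((k : ℂ) + 2 * n) * smIter k f n z / (z - (starRingEnd ℂ) z)) := rfl

set_option maxHeartbeats 1000000 in
lemma star {g : ℂ → ℂ} (hg : DifferentiableOn ℂ g {z : ℂ | 0 < z.im}) :
    ∀ n : ℕ, ∀ m : ℕ, ∀ z : ℂ, 0 < z.im →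
      2 * (Real.pi : ℂ) * Complex.I * (z - (starRingEnd ℂ) z) * smIter (m : ℤ) g (n+1) z
        = (z - (starRingEnd ℂ) z) * smIter ((m : ℤ)+2) (deriv g) n z
          + (m : ℂ) * smIter ((m : ℤ)+1) g n z := by
  intro n
  induction n generalizing g with
  | zero =>
    intro m z hz
    have hcne : z - (starRingEnd ℂ) z ≠ 0 := sub_conj_ne hz
    have hpi : (Real.pi : ℂ) ≠ 0 := by exact_mod_cast Real.pi_ne_zero
    have hgz : DifferentiableAt ℂ g z := hg.differentiableAt (isOpenU.mem_nhds hz)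
    rw [smIter_succ]
    show 2 * (Real.pi : ℂ) * Complex.I * (z - (starRingEnd ℂ) z) *
        ((1 / (2 * (Real.pi : ℂ) * Complex.I)) *
          (wirtingerDeriv g z + (((m : ℤ) : ℂ) + 2 * (0:ℕ)) * g z / (z - (starRingEnd ℂ) z)))
      = (z - (starRingEnd ℂ) z) * deriv g z + (m : ℂ) * g z
    rw [wd_holo hgz]
    push_cast
    field_simp
    ring
  | succ n IH =>
    intro m z hz
    have hg' : DifferentiableOn ℂ (deriv g) {z : ℂ | 0 < z.im} := deriv_diffOn hg
    have hcne : z - (starRingEnd ℂ) z ≠ 0 := sub_conj_ne hz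
    have hpi : (Real.pi : ℂ) ≠ 0 := by exact_mod_cast Real.pi_ne_zero
    set A := smIter ((m : ℤ)+2) (deriv g) n with hA
    set B := smIter ((m : ℤ)+1) g n with hB
    have hAd : DifferentiableAt ℝ A z := smIter_diffAt hg' _ n hz
    have hBd : DifferentiableAt ℝ B z := smIter_diffAt hg _ n hz
    have hiconj : DifferentiableAt ℝ (fun w : ℂ => w - (starRingEnd ℂ) w) z :=
      differentiableAt_id.sub (diff_conj z)
    have hinv : DifferentiableAt ℝ (fun w : ℂ => (w - (starRingEnd ℂ) w)⁻¹) z :=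
      hiconj.inv hcne
    have hEq : smIter (m : ℤ) g (n+1) =ᶠ[𝓝 z]
        (fun w => (1 / (2 * (Real.pi : ℂ) * Complex.I)) *
          (A w + (m : ℂ) * (B w * (w - (starRingEnd ℂ) w)⁻¹))) := by
      filter_upwards [isOpenU.mem_nhds hz] with w hw
      have h := IH hg m w hw
      have hwne : w - (starRingEnd ℂ) w ≠ 0 := sub_conj_ne hw
      rw [← hA, ← hB] at h
      field_simp
      linear_combination h
    have hS : smIter (m : ℤ) g (n+1) z = (1 / (2 * (Real.pi : ℂ) * Complex.I)) *
        (A z + (m : ℂ) * (B z * (z - (starRingEnd ℂ) z)⁻¹)) := hEq.eq_of_nhds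
    have hWinv : wirtingerDeriv (fun w : ℂ => (w - (starRingEnd ℂ) w)⁻¹) z
        = -1 / (z - (starRingEnd ℂ) z) ^ 2 := by
      rw [wd_inv hiconj hcne, wd_sub_conj]
    have hW : wirtingerDeriv (smIter (m : ℤ) g (n+1)) z
        = (1 / (2 * (Real.pi : ℂ) * Complex.I)) *
          (wirtingerDeriv A z + (m : ℂ) *
            (B z * (-1 / (z - (starRingEnd ℂ) z) ^ 2)
              + (z - (starRingEnd ℂ) z)⁻¹ * wirtingerDeriv B z)) := by
      rw [wd_congr hEq, wd_const_mul _ (hAd.fun_add ((hBd.fun_mul hinv).const_mul _)),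
        wd_add hAd ((hBd.fun_mul hinv).const_mul _), wd_const_mul _ (hBd.fun_mul hinv),
        wd_mul hBd hinv, hWinv]
    have hune : 2 * (Real.pi : ℂ) * Complex.I ≠ 0 := by
      simp [hpi, Complex.I_ne_zero]
    have hX : 2 * (Real.pi : ℂ) * Complex.I * (z - (starRingEnd ℂ) z)
          * smIter (m : ℤ) g (n+1+1) z
        = (z - (starRingEnd ℂ) z) * wirtingerDeriv (smIter (m : ℤ) g (n+1)) z
          + ((m : ℂ) + 2 * ((n : ℂ) + 1)) * smIter (m : ℤ) g (n+1) z := by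
      rw [smIter_succ (m : ℤ) g (n+1) z]
      push_cast
      field_simp
    have hRA : 2 * (Real.pi : ℂ) * Complex.I * (z - (starRingEnd ℂ) z)
          * smIter ((m : ℤ)+2) (deriv g) (n+1) z
        = (z - (starRingEnd ℂ) z) * wirtingerDeriv A z
          + ((m : ℂ) + 2 + 2 * (n : ℂ)) * A z := by
      rw [smIter_succ ((m : ℤ)+2) (deriv g) n z, ← hA]
      push_cast
      field_simp
    have hRB : 2 * (Real.pi : ℂ) * Complex.I * (z - (starRingEnd ℂ) z)
          * smIter ((m : ℤ)+1) g (n+1) z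
        = (z - (starRingEnd ℂ) z) * wirtingerDeriv B z
          + ((m : ℂ) + 1 + 2 * (n : ℂ)) * B z := by
      rw [smIter_succ ((m : ℤ)+1) g n z, ← hB]
      push_cast
      field_simp
    have hW2 : 2 * (Real.pi : ℂ) * Complex.I * (z - (starRingEnd ℂ) z) ^ 2
          * wirtingerDeriv (smIter (m : ℤ) g (n+1)) z
        = (z - (starRingEnd ℂ) z) ^ 2 * wirtingerDeriv A z
          + (m : ℂ) * ((z - (starRingEnd ℂ) z) * wirtingerDeriv B z - B z) := by
      rw [hW]
      field_simp
      ring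
    have hS2 : 2 * (Real.pi : ℂ) * Complex.I * (z - (starRingEnd ℂ) z)
          * smIter (m : ℤ) g (n+1) z
        = (z - (starRingEnd ℂ) z) * A z + (m : ℂ) * B z := by
      have h := IH hg m z hz
      rw [← hA, ← hB] at h
      exact h
    have hec : 2 * (Real.pi : ℂ) * Complex.I * (z - (starRingEnd ℂ) z) ≠ 0 :=
      mul_ne_zero hune hcne
    apply mul_left_cancel₀ hec
    linear_combination (2 * (Real.pi : ℂ) * Complex.I * (z - (starRingEnd ℂ) z)) * hX
      + (-(z - (starRingEnd ℂ) z)) * hRA + (-(m : ℂ)) * hRB + hW2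
      + ((m : ℂ) + 2 * ((n : ℂ) + 1)) * hS2

lemma zmap_zero (p : ℂ) : zmap p 0 = p := by
  simp [zmap]

lemma ball_ne_one {w : ℂ} (hw : w ∈ Metric.ball (0:ℂ) 1) : w - 1 ≠ 0 := by
  rw [mem_ball_zero_iff] at hw
  intro h
  rw [sub_eq_zero] at h
  rw [h] at hw
  simp at hw

lemma ball_one_sub_ne {w : ℂ} (hw : w ∈ Metric.ball (0:ℂ) 1) : (1:ℂ) - w ≠ 0 := by
  have := ball_ne_one hw
  intro h
  apply this
  rw [sub_eq_zero] at h ⊢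
  exact h.symm

lemma zmap_im_pos {p : ℂ} (hp : 0 < p.im) {w : ℂ} (hw : w ∈ Metric.ball (0:ℂ) 1) :
    0 < (zmap p w).im := by
  have hw1 : w - 1 ≠ 0 := ball_ne_one hw
  have hns : 0 < Complex.normSq (w - 1) := Complex.normSq_pos.2 hw1
  have hwlt : w.re ^ 2 + w.im ^ 2 < 1 := by
    rw [mem_ball_zero_iff] at hw
    have h1 : ‖w‖ < 1 := hw
    have h2 : Complex.normSq w < 1 := by
      rw [Complex.normSq_eq_norm_sq]
      nlinarith [norm_nonneg w]
    rw [Complex.normSq_apply] at h2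
    nlinarith
  rw [zmap, Complex.div_im, div_sub_div_same]
  apply div_pos _ hns
  simp only [Complex.sub_re, Complex.sub_im, Complex.mul_re, Complex.mul_im,
    Complex.conj_re, Complex.conj_im, Complex.one_re, Complex.one_im]
  nlinarith

lemma wmap_mem_ball {p z : ℂ} (hp : 0 < p.im) (hz : 0 < z.im) :
    wmap p z ∈ Metric.ball (0:ℂ) 1 := by
  have hzp : z - (starRingEnd ℂ) p ≠ 0 := by
    intro h
    have : (z - (starRingEnd ℂ) p).im = 0 := by rw [h]; simp
    simp only [Complex.sub_im, Complex.conj_im] at this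
    linarith
  rw [mem_ball_zero_iff, wmap, norm_div]
  rw [div_lt_one (norm_pos_iff.mpr hzp)]
  have h1 : Complex.normSq (z - p) < Complex.normSq (z - (starRingEnd ℂ) p) := by
    simp only [Complex.normSq_apply, Complex.sub_re, Complex.sub_im, Complex.conj_re,
      Complex.conj_im]
    nlinarith
  have h2 : ‖z - p‖ ^ 2 < ‖z - (starRingEnd ℂ) p‖ ^ 2 := by
    rwa [← Complex.normSq_eq_norm_sq, ← Complex.normSq_eq_norm_sq]
  nlinarith [norm_nonneg (z - p), norm_nonneg (z - (starRingEnd ℂ) p)]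

lemma conj_sub_ne {p : ℂ} (hp : 0 < p.im) : (starRingEnd ℂ) p - p ≠ 0 := by
  intro h
  have : ((starRingEnd ℂ) p - p).im = 0 := by rw [h]; simp
  simp only [Complex.sub_im, Complex.conj_im] at this
  linarith

lemma zmap_wmap {p z : ℂ} (hp : 0 < p.im) (hz : 0 < z.im) :
    zmap p (wmap p z) = z := by
  have hzp : z - (starRingEnd ℂ) p ≠ 0 := by
    intro h
    have : (z - (starRingEnd ℂ) p).im = 0 := by rw [h]; simp
    simp only [Complex.sub_im, Complex.conj_im] at this
    linarith
  have hw1 : wmap p z - 1 ≠ 0 := ball_ne_one (wmap_mem_ball hp hz)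
  rw [zmap, wmap]
  rw [wmap] at hw1
  field_simp
  field_simp at hw1
  rw [div_eq_iff (div_ne_zero_iff.mp hw1).1]
  ring

lemma zmap_diffAt (p : ℂ) {w : ℂ} (hw : w ∈ Metric.ball (0:ℂ) 1) :
    DifferentiableAt ℂ (zmap p) w := by
  apply DifferentiableAt.div
  · exact (differentiableAt_id.const_mul _).sub_const _
  · exact differentiableAt_id.sub_const _
  · exact ball_ne_one hw

lemma Fdiff (p : ℂ) (hp : 0 < p.im) (m : ℕ) {g : ℂ → ℂ}
    (hg : DifferentiableOn ℂ g {z : ℂ | 0 < z.im}) :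
    DifferentiableOn ℂ (fun w : ℂ => g (zmap p w) / (1 - w) ^ m) (Metric.ball 0 1) := by
  intro w hw
  have h1 : DifferentiableAt ℂ (fun w => g (zmap p w)) w :=
    (hg.differentiableAt (isOpenU.mem_nhds (zmap_im_pos hp hw))).comp w (zmap_diffAt p hw)
  exact ((h1.div (((differentiableAt_const _).sub differentiableAt_id).pow m)
    (pow_ne_zero m (ball_one_sub_ne hw)))).differentiableWithinAt

lemma itd_eq {f : ℂ → ℂ} {s : Set ℂ} {x : ℂ} (n : ℕ) (hs : IsOpen s) (hx : x ∈ s) :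
    iteratedDerivWithin n f s x = iteratedDeriv n f x := by
  have h := iteratedFDerivWithin_of_isOpen (𝕜 := ℂ) (f := f) n hs hx
  rw [iteratedDerivWithin_eq_iteratedFDerivWithin, iteratedDeriv_eq_iteratedFDeriv, h]

lemma derivF_eq (p : ℂ) (hp : 0 < p.im) (m : ℕ) {g : ℂ → ℂ}
    (hg : DifferentiableOn ℂ g {z : ℂ | 0 < z.im}) {w : ℂ} (hw : w ∈ Metric.ball (0:ℂ) 1) :
    deriv (fun w : ℂ => g (zmap p w) / (1 - w) ^ m) w
      = (p - (starRingEnd ℂ) p) * (deriv g (zmap p w) / (1 - w) ^ (m + 2))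
        + (m : ℂ) * (g (zmap p w) / (1 - w) ^ (m + 1)) := by
  have hw1 : w - 1 ≠ 0 := ball_ne_one hw
  have h1w : (1:ℂ) - w ≠ 0 := ball_one_sub_ne hw
  have hzw : 0 < (zmap p w).im := zmap_im_pos hp hw
  have h2 : HasDerivAt (zmap p) ((p - (starRingEnd ℂ) p) / (w - 1) ^ 2) w := by
    have hnum : HasDerivAt (fun w : ℂ => (starRingEnd ℂ) p * w - p) ((starRingEnd ℂ) p) w := by
      simpa using ((hasDerivAt_id w).const_mul ((starRingEnd ℂ) p)).sub_const p
    have hden : HasDerivAt (fun w : ℂ => w - 1) 1 w := (hasDerivAt_id w).sub_const 1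
    have h := hnum.div hden hw1
    have heq : ((starRingEnd ℂ) p * (w - 1) - ((starRingEnd ℂ) p * w - p) * 1) / (w - 1) ^ 2
        = (p - (starRingEnd ℂ) p) / (w - 1) ^ 2 := by
      rw [div_eq_div_iff (pow_ne_zero 2 hw1) (pow_ne_zero 2 hw1)]
      ring
    rw [heq] at h
    exact h
  have h3 : HasDerivAt (fun w => g (zmap p w))
      (deriv g (zmap p w) * ((p - (starRingEnd ℂ) p) / (w - 1) ^ 2)) w :=
    ((hg.differentiableAt (isOpenU.mem_nhds hzw)).hasDerivAt).comp w h2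
  have h5 : HasDerivAt (fun w : ℂ => 1 - w) (-1) w := (hasDerivAt_id w).const_sub 1
  have h4 : HasDerivAt (fun w : ℂ => (1 - w) ^ m) ((m : ℂ) * (1 - w) ^ (m - 1) * (-1)) w :=
    h5.pow m
  have h6 := h3.fun_div h4 (pow_ne_zero m h1w)
  rw [h6.deriv]
  have hsq : (w - 1) ^ 2 = (1 - w) ^ 2 := by ring
  rw [hsq]
  rcases m with _ | m'
  · simp only [Nat.cast_zero, pow_zero]
    field_simp
    ring
  · simp only [Nat.add_sub_cancel]
    push_cast
    field_simp
    ring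

set_option maxHeartbeats 1000000 in
lemma key (p : ℂ) (hp : 0 < p.im) :
    ∀ n : ℕ, ∀ m : ℕ, ∀ g : ℂ → ℂ, DifferentiableOn ℂ g {z : ℂ | 0 < z.im} →
      iteratedDeriv n (fun w : ℂ => g (zmap p w) / (1 - w) ^ m) 0
        = smIter (m : ℤ) g n p * (-4 * (Real.pi : ℂ) * (p.im : ℂ)) ^ n := by
  intro n
  induction n with
  | zero =>
    intro m g hg
    rw [iteratedDeriv_zero]
    simp only [pow_zero, mul_one]
    rw [zmap_zero]
    show g p / (1 - 0) ^ m = g p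
    simp
  | succ n IH =>
    intro m g hg
    have hg' : DifferentiableOn ℂ (deriv g) {z : ℂ | 0 < z.im} := deriv_diffOn hg
    have h0 : (0:ℂ) ∈ Metric.ball (0:ℂ) 1 := by simp
    have hsop : IsOpen (Metric.ball (0:ℂ) 1) := Metric.isOpen_ball
    have hu : UniqueDiffOn ℂ (Metric.ball (0:ℂ) 1) := hsop.uniqueDiffOn
    set F1 : ℂ → ℂ := fun w => deriv g (zmap p w) / (1 - w) ^ (m + 2) with hF1
    set F2 : ℂ → ℂ := fun w => g (zmap p w) / (1 - w) ^ (m + 1) with hF2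
    have hC1 : ContDiffOn ℂ n (fun w => (p - (starRingEnd ℂ) p) * F1 w) (Metric.ball 0 1) :=
      ((differentiableOn_const _).mul (Fdiff p hp (m+2) hg')).contDiffOn hsop
    have hC2 : ContDiffOn ℂ n (fun w => (m : ℂ) * F2 w) (Metric.ball 0 1) :=
      ((differentiableOn_const _).mul (Fdiff p hp (m+1) hg)).contDiffOn hsop
    have hCF1 : ContDiffOn ℂ n F1 (Metric.ball 0 1) := (Fdiff p hp (m+2) hg').contDiffOn hsop
    have hCF2 : ContDiffOn ℂ n F2 (Metric.ball 0 1) := (Fdiff p hp (m+1) hg).contDiffOn hsop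
    have hEE : deriv (fun w : ℂ => g (zmap p w) / (1 - w) ^ m) =ᶠ[𝓝 0]
        (fun w => (p - (starRingEnd ℂ) p) * F1 w + (m : ℂ) * F2 w) := by
      filter_upwards [hsop.mem_nhds h0] with w hw
      exact derivF_eq p hp m hg hw
    rw [iteratedDeriv_succ', hEE.iteratedDeriv_eq n]
    have hsplit : (fun w => (p - (starRingEnd ℂ) p) * F1 w + (m : ℂ) * F2 w)
        = (fun w => (p - (starRingEnd ℂ) p) * F1 w) + (fun w => (m : ℂ) * F2 w) := rfl
    rw [← itd_eq n hsop h0, hsplit,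
      iteratedDerivWithin_add h0 hu (hC1 0 h0) (hC2 0 h0),
      iteratedDerivWithin_const_mul h0 hu _ (hCF1 0 h0),
      iteratedDerivWithin_const_mul h0 hu _ (hCF2 0 h0),
      itd_eq n hsop h0, itd_eq n hsop h0]
    have hI1 : iteratedDeriv n F1 0 = smIter ((m+2 : ℕ) : ℤ) (deriv g) n p
        * (-4 * (Real.pi : ℂ) * (p.im : ℂ)) ^ n := IH (m+2) (deriv g) hg'
    have hI2 : iteratedDeriv n F2 0 = smIter ((m+1 : ℕ) : ℤ) g n p
        * (-4 * (Real.pi : ℂ) * (p.im : ℂ)) ^ n := IH (m+1) g hg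
    rw [hF1, hF2, hI1, hI2]
    have hcast2 : ((m+2 : ℕ) : ℤ) = (m : ℤ) + 2 := by push_cast; ring
    have hcast1 : ((m+1 : ℕ) : ℤ) = (m : ℤ) + 1 := by push_cast; ring
    rw [hcast2, hcast1]
    have hstar := star hg n m p hp
    have hm4 : (-4 * (Real.pi : ℂ) * (p.im : ℂ))
        = 2 * (Real.pi : ℂ) * Complex.I * (p - (starRingEnd ℂ) p) := by
      rw [Complex.sub_conj]
      push_cast
      linear_combination (-4 * (Real.pi : ℂ) * (p.im : ℂ)) * Complex.I_sq
    rw [pow_succ]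
    linear_combination (-((-4 * (Real.pi : ℂ) * (p.im : ℂ)) ^ n)) * hstar
      + (-(smIter (m : ℤ) g (n+1) p * (-4 * (Real.pi : ℂ) * (p.im : ℂ)) ^ n)) * hm4

theorem taylor_coeffs_eq_smIter (k : ℕ) (f : ℂ → ℂ)
    (hf : ∀ z : ℂ, 0 < z.im → DifferentiableAt ℂ f z)
    (p : ℂ) (hp : 0 < p.im) :
    DifferentiableOn ℂ (fun w : ℂ => f (zmap p w) / (1 - w) ^ k) (Metric.ball 0 1) ∧
    (∀ n : ℕ,
      iteratedDeriv n (fun w : ℂ => f (zmap p w) / (1 - w) ^ k) 0 / (n.factorial : ℂ) =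
        smIter (k : ℤ) f n p / (n.factorial : ℂ) *
          (-4 * (Real.pi : ℂ) * (p.im : ℂ)) ^ n) ∧
    (∀ z : ℂ, 0 < z.im → ∃ S : ℂ,
      HasSum (fun n : ℕ =>
        (smIter (k : ℤ) f n p / (n.factorial : ℂ) *
          (-4 * (Real.pi : ℂ) * (p.im : ℂ)) ^ n) * wmap p z ^ n) S ∧
      f z = (1 - wmap p z) ^ k * S) := by
  have hgU : DifferentiableOn ℂ f {z : ℂ | 0 < z.im} :=
    fun z hz => (hf z hz).differentiableWithinAt
  refine ⟨Fdiff p hp k hgU, ?_, ?_⟩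
  · intro n
    rw [key p hp n k f hgU]
    ring
  · intro z hz
    have hw : wmap p z ∈ Metric.ball (0:ℂ) 1 := wmap_mem_ball hp hz
    have h1w : (1:ℂ) - wmap p z ≠ 0 := ball_one_sub_ne hw
    have hsum := Complex.hasSum_taylorSeries_on_ball (Fdiff p hp k hgU) hw
    refine ⟨f z / (1 - wmap p z) ^ k, ?_, ?_⟩
    · have hfun : (fun n : ℕ =>
          (smIter (k : ℤ) f n p / (n.factorial : ℂ) *
            (-4 * (Real.pi : ℂ) * (p.im : ℂ)) ^ n) * wmap p z ^ n)
          = fun n : ℕ => ((n.factorial : ℂ))⁻¹ • (wmap p z - 0) ^ n •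
              iteratedDeriv n (fun w : ℂ => f (zmap p w) / (1 - w) ^ k) 0 := by
        funext n
        rw [smul_eq_mul, smul_eq_mul, sub_zero, key p hp n k f hgU]
        ring
      rw [hfun]
      have hval : f (zmap p (wmap p z)) / (1 - wmap p z) ^ k
          = f z / (1 - wmap p z) ^ k := by rw [zmap_wmap hp hz]
      rw [← hval]
      exact hsum
    · rw [mul_comm, div_mul_cancel₀ _ (pow_ne_zero _ h1w)]
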